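/- For c ∈ (0,1), let G₁, G_{1-c}, G_c be independent gamma random variables with shape parameters 1, 1-c, c respectively (rate 1). Then E[exp(-λ · G₁·G_{1-c}/G_c)] = (1 - λ^c)/(1 - λ) for λ ≥ 0, λ ≠ 1, and equals c at λ = 1. -/

import Mathlib

set_option maxHeartbeats 1000000

open Real Set MeasureTheory ProbabilityTheory Filter
open scoped ENNReal NNReal

namespace GQL


/-- integrability of `t^(a-1) e^{-rt}` on `Ioi 0`. -/
lemma integrableOn_rpow_exp {a r : ℝ} (ha : 0 < a) (hr : 0 < r) :
    IntegrableOn (fun t : ℝ => t ^ (a - 1) * Real.exp (-(r * t))) (Ioi 0) := by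
  have h := Real.GammaIntegral_convergent ha
  have h2 : IntegrableOn (fun t : ℝ => Real.exp (-(r * t)) * (r * t) ^ (a - 1)) (Ioi 0) := by
    have := (integrableOn_Ioi_comp_mul_left_iff
      (fun x : ℝ => Real.exp (-x) * x ^ (a - 1)) 0 hr).2 (by simpa using h)
    simpa using this
  have h3 := h2.const_mul ((r:ℝ) ^ (a-1))⁻¹
  refine IntegrableOn.congr_fun h3 (fun t ht => ?_) measurableSet_Ioi
  rw [Real.mul_rpow hr.le (le_of_lt ht)]
  have : (r:ℝ) ^ (a-1) ≠ 0 := (Real.rpow_pos_of_pos hr _).ne'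
  field_simp

lemma integral_exp_neg_mul_Ioi {s : ℝ} (hs : 0 < s) :
    ∫ x in Ioi (0:ℝ), Real.exp (-(s * x)) = 1 / s := by
  have h := Real.integral_rpow_mul_exp_neg_mul_Ioi (a := 1) one_pos hs
  simp only [sub_self, Real.rpow_one, Real.Gamma_one, mul_one] at h
  rw [← h]
  refine setIntegral_congr_fun measurableSet_Ioi (fun x hx => ?_)
  rw [Real.rpow_zero, one_mul]

lemma integrableOn_exp_neg_mul {s : ℝ} (hs : 0 < s) :
    IntegrableOn (fun x : ℝ => Real.exp (-(s * x))) (Ioi 0) := by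
  have h := integrableOn_rpow_exp one_pos hs
  refine IntegrableOn.congr_fun h (fun x hx => ?_) measurableSet_Ioi
  simp [Real.rpow_zero]




lemma meas_f {a q : ℝ} : Measurable (fun u : ℝ => u ^ (a-1) * (1+u) ^ q) := by
  fun_prop

lemma beta_integrableOn {a b : ℝ} (ha : 0 < a) (hb : 0 < b) :
    IntegrableOn (fun u : ℝ => u ^ (a-1) * (1+u) ^ (-(a+b))) (Ioi 0) := by
  have h1 : IntegrableOn (fun u : ℝ => u ^ (a-1) * (1+u) ^ (-(a+b))) (Ioc 0 1) := by
    have hbound : IntegrableOn (fun u : ℝ => u ^ (a-1)) (Ioc 0 1) := by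
      have := intervalIntegral.intervalIntegrable_rpow' (a := 0) (b := 1)
        (show (-1:ℝ) < a - 1 by linarith)
      rwa [intervalIntegrable_iff_integrableOn_Ioc_of_le zero_le_one] at this
    refine Integrable.mono' hbound (meas_f.aestronglyMeasurable.restrict) ?_
    filter_upwards [ae_restrict_mem measurableSet_Ioc] with u hu
    have hu0 : 0 < u := hu.1
    rw [norm_mul, norm_of_nonneg (rpow_nonneg hu0.le _),
      norm_of_nonneg (rpow_nonneg (by linarith) _)]
    have : (1+u) ^ (-(a+b)) ≤ 1 :=
      rpow_le_one_of_one_le_of_nonpos (by linarith) (by linarith)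
    nlinarith [rpow_pos_of_pos hu0 (a-1), rpow_nonneg (show (0:ℝ) ≤ 1+u by linarith) (-(a+b))]
  have h2 : IntegrableOn (fun u : ℝ => u ^ (a-1) * (1+u) ^ (-(a+b))) (Ioi 1) := by
    have hbound : IntegrableOn (fun u : ℝ => u ^ (-b-1)) (Ioi 1) :=
      integrableOn_Ioi_rpow_of_lt (by linarith) one_pos
    refine Integrable.mono' hbound (meas_f.aestronglyMeasurable.restrict) ?_
    filter_upwards [ae_restrict_mem measurableSet_Ioi] with u hu
    have hu0 : (0:ℝ) < u := lt_trans one_pos hu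
    rw [norm_mul, norm_of_nonneg (rpow_nonneg hu0.le _),
      norm_of_nonneg (rpow_nonneg (by linarith) _)]
    have h3 : (1+u) ^ (-(a+b)) ≤ u ^ (-(a+b)) :=
      rpow_le_rpow_of_nonpos hu0 (by linarith) (by linarith)
    have h4 : u ^ (a-1) * u ^ (-(a+b)) = u ^ (-b-1) := by
      rw [← Real.rpow_add hu0]; ring_nf
    calc u ^ (a-1) * (1+u) ^ (-(a+b)) ≤ u ^ (a-1) * u ^ (-(a+b)) := by
          exact mul_le_mul_of_nonneg_left h3 (rpow_nonneg hu0.le _)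
      _ = u ^ (-b-1) := h4
  have := h1.union h2
  rwa [Ioc_union_Ioi_eq_Ioi zero_le_one] at this




lemma beta_integral {a b : ℝ} (ha : 0 < a) (hb : 0 < b) :
    ∫ u in Ioi (0:ℝ), u ^ (a-1) * (1+u) ^ (-(a+b)) = Gamma a * Gamma b / Gamma (a+b) := by
  have hp : 0 < a + b := by linarith
  set F : ℝ → ℝ → ℝ :=
    fun u s => u ^ (a-1) * (s ^ (a+b-1) * Real.exp (-s) * Real.exp (-(u*s))) with hF
  have key1 : ∀ u : ℝ, 0 < u → ∫ s in Ioi (0:ℝ), F u s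
      = u ^ (a-1) * ((1+u) ^ (-(a+b)) * Gamma (a+b)) := by
    intro u hu
    have h1u : (0:ℝ) < 1 + u := by linarith
    have e1 : ∀ s : ℝ, F u s = u ^ (a-1) * (s ^ (a+b-1) * Real.exp (-((1+u)*s))) := by
      intro s
      rw [hF, show -((1+u)*s) = -s + -(u*s) by ring, Real.exp_add]
      ring
    simp only [e1]
    rw [integral_const_mul, integral_rpow_mul_exp_neg_mul_Ioi hp h1u,
      div_rpow zero_le_one h1u.le, one_rpow, Real.rpow_neg h1u.le, one_div]
  have key4 : ∀ s : ℝ, 0 < s → ∫ u in Ioi (0:ℝ), F u s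
      = Real.exp (-s) * s ^ (b-1) * Gamma a := by
    intro s hs
    have e1 : ∀ u : ℝ, F u s = (s ^ (a+b-1) * Real.exp (-s)) * (u ^ (a-1) * Real.exp (-(s*u))) := by
      intro u; rw [hF]; ring_nf
    simp only [e1]
    rw [integral_const_mul, integral_rpow_mul_exp_neg_mul_Ioi ha hs,
      div_rpow zero_le_one hs.le, one_rpow, one_div, ← Real.rpow_neg hs.le,
      show s ^ (a+b-1) * Real.exp (-s) * (s ^ (-a) * Gamma a)
        = Real.exp (-s) * (s ^ (a+b-1) * s ^ (-a)) * Gamma a from by ring,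
      ← Real.rpow_add hs, show a+b-1 + -a = b - 1 from by ring]
  have key2 : Integrable (Function.uncurry F)
      ((volume.restrict (Ioi 0)).prod (volume.restrict (Ioi 0))) := by
    have hmeas : AEStronglyMeasurable (Function.uncurry F)
        ((volume.restrict (Ioi 0)).prod (volume.restrict (Ioi 0))) := by
      apply Measurable.aestronglyMeasurable
      unfold F
      unfold Function.uncurry
      fun_prop
    rw [integrable_prod_iff hmeas]
    constructor
    · filter_upwards [ae_restrict_mem measurableSet_Ioi] with u hu
      have h1u : (0:ℝ) < 1 + u := by have := mem_Ioi.mp hu; linarith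
      have : (fun s => Function.uncurry F (u, s))
          = fun s => u ^ (a-1) * (s ^ (a+b-1) * Real.exp (-((1+u)*s))) := by
        funext s
        show F u s = _
        rw [hF, show -((1+u)*s) = -s + -(u*s) by ring, Real.exp_add]; ring
      rw [this]
      exact ((integrableOn_rpow_exp hp h1u).const_mul _)
    · have heq : (fun u => ∫ s in Ioi (0:ℝ), ‖Function.uncurry F (u, s)‖)
          =ᵐ[volume.restrict (Ioi (0:ℝ))]
          (fun u => (u ^ (a-1) * (1+u) ^ (-(a+b))) * Gamma (a+b)) := by
        filter_upwards [ae_restrict_mem measurableSet_Ioi] with u hu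
        have hu0 := mem_Ioi.mp hu
        have : ∫ s in Ioi (0:ℝ), ‖Function.uncurry F (u, s)‖ = ∫ s in Ioi (0:ℝ), F u s := by
          refine integral_congr_ae ?_
          filter_upwards [ae_restrict_mem measurableSet_Ioi] with s hs
          have hs0 := mem_Ioi.mp hs
          show ‖F u s‖ = F u s
          rw [norm_of_nonneg]
          rw [hF]
          positivity
        rw [this, key1 u hu0]; ring
      exact ((beta_integrableOn ha hb).mul_const _).congr heq.symm
  have swap := integral_integral_swap key2
  -- LHS * Gamma (a+b) = Gamma a * Gamma b
  have main : (∫ u in Ioi (0:ℝ), u ^ (a-1) * (1+u) ^ (-(a+b))) * Gamma (a+b)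
      = Gamma a * Gamma b := by
    have l1 : (∫ u in Ioi (0:ℝ), u ^ (a-1) * (1+u) ^ (-(a+b))) * Gamma (a+b)
        = ∫ u in Ioi (0:ℝ), ∫ s in Ioi (0:ℝ), F u s := by
      rw [← integral_mul_const]
      refine integral_congr_ae ?_
      filter_upwards [ae_restrict_mem measurableSet_Ioi] with u hu
      rw [key1 u (mem_Ioi.mp hu)]; ring
    have l2 : ∫ s in Ioi (0:ℝ), ∫ u in Ioi (0:ℝ), F u s = Gamma a * Gamma b := by
      have : ∫ s in Ioi (0:ℝ), ∫ u in Ioi (0:ℝ), F u s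
          = ∫ s in Ioi (0:ℝ), (Real.exp (-s) * s ^ (b-1)) * Gamma a := by
        refine integral_congr_ae ?_
        filter_upwards [ae_restrict_mem measurableSet_Ioi] with s hs
        rw [key4 s (mem_Ioi.mp hs)]
      rw [this, integral_mul_const, ← Real.Gamma_eq_integral hb]; ring
    rw [l1, swap, l2]
  rw [eq_div_iff (Real.Gamma_pos_of_pos hp).ne']
  exact main




lemma inv_integral (hc : c ∈ Ioo (0:ℝ) 1) :
    ∫ u in Ioi (0:ℝ), u ^ (-c) / (1+u) = Gamma (1-c) * Gamma c := by
  have h := beta_integral (a := 1-c) (b := c) (by linarith [hc.2]) hc.1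
  rw [show (1-c) + c = 1 by ring, Real.Gamma_one, div_one] at h
  rw [← h]
  refine setIntegral_congr_fun measurableSet_Ioi (fun u hu => ?_)
  rw [show (1-c) - 1 = -c by ring, Real.rpow_neg_one, div_eq_mul_inv]

lemma inv_integrableOn (hc : c ∈ Ioo (0:ℝ) 1) :
    IntegrableOn (fun u : ℝ => u ^ (-c) / (1+u)) (Ioi 0) := by
  have h := beta_integrableOn (a := 1-c) (b := c) (by linarith [hc.2]) hc.1
  refine IntegrableOn.congr_fun h (fun u hu => ?_) measurableSet_Ioi
  rw [show (1-c) + c = 1 by ring, show (1-c) - 1 = -c by ring, Real.rpow_neg_one,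
    div_eq_mul_inv]

lemma inv_sq_integral (hc : c ∈ Ioo (0:ℝ) 1) :
    ∫ u in Ioi (0:ℝ), u ^ (-c) / ((1+u)*(1+u)) = c * (Gamma (1-c) * Gamma c) := by
  have h := beta_integral (a := 1-c) (b := 1+c) (by linarith [hc.2]) (by linarith [hc.1])
  rw [show (1-c) + (1+c) = 2 by ring] at h
  have hG2 : Gamma (2:ℝ) = 1 := by
    rw [show (2:ℝ) = 1 + 1 by norm_num, Real.Gamma_add_one one_ne_zero, Real.Gamma_one, mul_one]
  have hG1c : Gamma (1+c) = c * Gamma c := by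
    rw [add_comm, Real.Gamma_add_one hc.1.ne']
  rw [hG2, div_one, hG1c] at h
  rw [show c * (Gamma (1-c) * Gamma c) = Gamma (1-c) * (c * Gamma c) by ring, ← h]
  refine setIntegral_congr_fun measurableSet_Ioi (fun u hu => ?_)
  have hu0 : (0:ℝ) < u := hu
  have h1u : (0:ℝ) < 1 + u := by linarith
  rw [show (1-c) - 1 = -c by ring, show (-2 : ℝ) = -(2:ℕ) by norm_num, Real.rpow_neg h1u.le,
    Real.rpow_natCast, div_eq_mul_inv]
  norm_num [sq]

lemma scaled_inv_integral (hc : c ∈ Ioo (0:ℝ) 1) {l : ℝ} (hl : 0 < l) :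
    ∫ u in Ioi (0:ℝ), u ^ (-c) / (1+l*u) = l ^ (c-1) * (Gamma (1-c) * Gamma c) := by
  have h := integral_comp_mul_left_Ioi (fun y : ℝ => y ^ (-c) / (1+y)) 0 hl
  simp only [mul_zero, smul_eq_mul] at h
  have e : ∀ u ∈ Ioi (0:ℝ), (l*u) ^ (-c) / (1+l*u) = l^(-c) * (u ^ (-c) / (1+l*u)) := by
    intro u hu
    rw [Real.mul_rpow hl.le (le_of_lt hu)]
    ring
  rw [setIntegral_congr_fun measurableSet_Ioi e, integral_const_mul, inv_integral hc] at h
  have hlc : l ^ (-c) ≠ 0 := (Real.rpow_pos_of_pos hl _).ne'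
  have : ∫ u in Ioi (0:ℝ), u ^ (-c) / (1+l*u)
      = (l^(-c))⁻¹ * (l⁻¹ * (Gamma (1-c) * Gamma c)) := by
    field_simp at h ⊢
    linarith [h]
  rw [this, ← Real.rpow_neg hl.le, neg_neg]
  rw [show l ^ (c-1) = l ^ c * l⁻¹ by
    rw [show c - 1 = c + (-1) by ring, Real.rpow_add hl, Real.rpow_neg_one]]
  ring

lemma scaled_inv_integrableOn (hc : c ∈ Ioo (0:ℝ) 1) {l : ℝ} (hl : 0 < l) :
    IntegrableOn (fun u : ℝ => u ^ (-c) / (1+l*u)) (Ioi 0) := by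
  have h := (integrableOn_Ioi_comp_mul_left_iff (fun y : ℝ => y ^ (-c) / (1+y)) 0 hl).2
    (by simpa using inv_integrableOn hc)
  have h2 := h.const_mul (l ^ c)
  refine IntegrableOn.congr_fun h2 (fun u hu => ?_) measurableSet_Ioi
  have hu0 : (0:ℝ) < u := hu
  rw [Real.mul_rpow hl.le hu0.le]
  rw [show l ^ c * ((l ^ (-c) * u ^ (-c)) / (1 + l*u)) = (l^c * l^(-c)) * u^(-c) / (1+l*u) by ring,
    ← Real.rpow_add hl, add_neg_cancel, Real.rpow_zero, one_mul]

lemma K_integrableOn (hc : c ∈ Ioo (0:ℝ) 1) {l : ℝ} (hl : 0 ≤ l) :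
    IntegrableOn (fun u : ℝ => u ^ (-c) / ((1+u)*(1+l*u))) (Ioi 0) := by
  refine Integrable.mono' (inv_integrableOn hc) ?_ ?_
  · apply Measurable.aestronglyMeasurable
    fun_prop
  · filter_upwards [ae_restrict_mem measurableSet_Ioi] with u hu
    have hu0 : (0:ℝ) < u := hu
    have h1 : (0:ℝ) < 1 + u := by linarith
    have h2 : (1:ℝ) ≤ 1 + l*u := by nlinarith
    rw [norm_of_nonneg (by positivity)]
    rw [div_le_div_iff₀ (by positivity) (by positivity)]
    have h3 := Real.rpow_pos_of_pos hu0 (-c)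
    nlinarith [mul_le_mul_of_nonneg_left h2 (mul_nonneg h3.le h1.le)]

lemma K_integral_ne (hc : c ∈ Ioo (0:ℝ) 1) {l : ℝ} (hl : 0 ≤ l) (hl1 : l ≠ 1) :
    ∫ u in Ioi (0:ℝ), u ^ (-c) / ((1+u)*(1+l*u))
      = (1 - l ^ c)/(1 - l) * (Gamma (1-c) * Gamma c) := by
  rcases eq_or_lt_of_le hl with rfl | hl0
  · simp only [zero_mul, add_zero, mul_one]
    rw [inv_integral hc, Real.zero_rpow hc.1.ne']
    norm_num
  · have hden : (1:ℝ) - l ≠ 0 := fun h => hl1 (by linarith)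
    have pf : ∀ u ∈ Ioi (0:ℝ), u ^ (-c) / ((1+u)*(1+l*u))
        = (1/(1-l)) * (u ^ (-c) / (1+u)) - (l/(1-l)) * (u ^ (-c) / (1+l*u)) := by
      intro u hu
      have hu0 : (0:ℝ) < u := hu
      have h1 : (1:ℝ) + u ≠ 0 := by positivity
      have h2 : (1:ℝ) + l*u ≠ 0 := by positivity
      field_simp
      ring
    rw [setIntegral_congr_fun measurableSet_Ioi pf]
    rw [integral_sub (((inv_integrableOn hc).const_mul _))
      ((scaled_inv_integrableOn hc hl0).const_mul _),
      integral_const_mul, integral_const_mul, inv_integral hc, scaled_inv_integral hc hl0]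
    have hlc : l * l ^ (c-1) = l ^ c := by
      rw [show l * l^(c-1) = l^(1:ℝ) * l^(c-1) by rw [Real.rpow_one],
        ← Real.rpow_add hl0, show 1 + (c-1) = c by ring]
    rw [← hlc]
    field_simp

lemma K_integral_one (hc : c ∈ Ioo (0:ℝ) 1) :
    ∫ u in Ioi (0:ℝ), u ^ (-c) / ((1+u)*(1+1*u)) = c * (Gamma (1-c) * Gamma c) := by
  rw [← inv_sq_integral hc]
  refine setIntegral_congr_fun measurableSet_Ioi (fun u hu => ?_)
  norm_num




lemma ae_ne_zero : ∀ᵐ x : ℝ, x ≠ 0 := by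
  rw [ae_iff]
  simp only [ne_eq, not_not]
  have : {x : ℝ | x = 0} = {(0:ℝ)} := by ext x; simp
  rw [this, Real.volume_singleton]

lemma integral_gammaMeasure {a : ℝ} (ha : 0 < a) (g : ℝ → ℝ) :
    ∫ x, g x ∂(gammaMeasure a 1)
      = ∫ x in Ioi (0:ℝ), (x ^ (a-1) * Real.exp (-x) / Gamma a) * g x := by
  have hd : gammaMeasure a 1
      = volume.withDensity (fun x => ((gammaPDFReal a 1 x).toNNReal : ℝ≥0∞)) := rfl
  rw [hd, integral_withDensity_eq_integral_smul (measurable_gammaPDFReal a 1).real_toNNReal g]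
  have h1 : ∀ x : ℝ, (gammaPDFReal a 1 x).toNNReal • g x = gammaPDFReal a 1 x * g x := by
    intro x
    rw [NNReal.smul_def, Real.coe_toNNReal _ (gammaPDFReal_nonneg ha one_pos x)]
    rfl
  simp only [h1]
  rw [← setIntegral_eq_integral_of_ae_compl_eq_zero (s := Ioi (0:ℝ)) ?_]
  · refine setIntegral_congr_fun measurableSet_Ioi (fun x hx => ?_)
    have hx0 : (0:ℝ) < x := hx
    rw [gammaPDFReal, if_pos hx0.le, Real.one_rpow]
    ring
  · filter_upwards [ae_ne_zero] with x hx hmem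
    have hx0 : x < 0 := by
      rcases lt_trichotomy x 0 with h | h | h
      · exact h
      · exact absurd h hx
      · exact absurd h hmem
    rw [gammaPDFReal, if_neg (not_le.mpr hx0), zero_mul]

lemma gammaMeasure_Iic {a : ℝ} (ha : 0 < a) : gammaMeasure a 1 (Iic 0) = 0 := by
  rw [gammaMeasure, withDensity_apply _ measurableSet_Iic]
  have : ∀ᵐ x ∂(volume.restrict (Iic (0:ℝ))), gammaPDF a 1 x = 0 := by
    filter_upwards [ae_restrict_mem measurableSet_Iic, ae_restrict_of_ae ae_ne_zero] with x hx hx0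
    exact gammaPDF_of_neg (lt_of_le_of_ne hx hx0)
  rw [lintegral_congr_ae this, lintegral_zero]

lemma gammaMeasure_ae_pos {a : ℝ} (ha : 0 < a) : ∀ᵐ x ∂(gammaMeasure a 1), 0 < x := by
  rw [ae_iff]
  convert gammaMeasure_Iic ha using 2
  ext x; simp



lemma inner1 {l : ℝ} (hl : 0 ≤ l) {x1 x2 : ℝ} (hx1 : 0 < x1) (hx2 : 0 < x2) :
    ∫ x, Real.exp (-(l * (x * x1 / x2))) ∂(gammaMeasure 1 1) = x2 / (x2 + l * x1) := by
  have hs : 0 < 1 + l * x1 / x2 := by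
    have := div_nonneg (mul_nonneg hl hx1.le) hx2.le
    linarith
  rw [integral_gammaMeasure one_pos]
  have e : ∀ x ∈ Ioi (0:ℝ), (x ^ ((1:ℝ)-1) * Real.exp (-x) / Gamma 1)
        * Real.exp (-(l * (x * x1 / x2)))
      = Real.exp (-((1 + l * x1 / x2) * x)) := by
    intro x hx
    simp only [sub_self, Real.rpow_zero, Real.Gamma_one, one_mul, div_one]
    rw [← Real.exp_add]
    congr 1
    ring
  rw [setIntegral_congr_fun measurableSet_Ioi e, integral_exp_neg_mul_Ioi hs]
  have hne2 : 0 < x2 + l * x1 := by nlinarith [mul_nonneg hl hx1.le]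
  field_simp

lemma step5 {c l : ℝ} (hc : c ∈ Ioo (0:ℝ) 1) (hl : 0 ≤ l) (x2 : ℝ) (hx2 : 0 < x2) :
    ∫ x1, x2 / (x2 + l * x1) ∂(gammaMeasure (1-c) 1)
      = x2 ^ (1-c) / Gamma (1-c) * ∫ u in Ioi (0:ℝ), u ^ (-c) * Real.exp (-(x2*u)) / (1+l*u) := by
  have hc1 : (0:ℝ) < 1 - c := by linarith [hc.2]
  rw [integral_gammaMeasure hc1 (fun x1 => x2 / (x2 + l * x1))]
  have hcomp := integral_comp_mul_left_Ioi
    (fun y => (y ^ ((1-c)-1) * Real.exp (-y) / Gamma (1-c)) * (x2 / (x2 + l * y))) 0 hx2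
  simp only [mul_zero, smul_eq_mul] at hcomp
  have h2 := congrArg (fun z => x2 * z) hcomp
  simp only [← mul_assoc, mul_inv_cancel₀ hx2.ne', one_mul] at h2
  rw [← h2, ← integral_const_mul x2]
  rw [← integral_const_mul (x2 ^ (1-c) / Gamma (1-c))]
  refine setIntegral_congr_fun measurableSet_Ioi (fun u hu => ?_)
  have hu0 : (0:ℝ) < u := hu
  have h1lu : (0:ℝ) < 1 + l*u := by nlinarith [mul_nonneg hl hu0.le]
  have hG1c := Real.Gamma_pos_of_pos hc1
  show x2 * (((x2*u) ^ ((1-c)-1) * Real.exp (-(x2*u)) / Gamma (1-c)) * (x2 / (x2 + l * x2 * u)))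
    = x2 ^ (1-c) / Gamma (1-c) * (u ^ (-c) * Real.exp (-(x2*u)) / (1+l*u))
  rw [show (1-c)-1 = -c by ring, Real.mul_rpow hx2.le hu0.le,
    show x2 + l*x2*u = x2 * (1+l*u) by ring,
    show x2 ^ (1-c) = x2 * x2 ^ (-c) by
      rw [show (1:ℝ)-c = 1 + (-c) by ring, Real.rpow_add hx2, Real.rpow_one]]
  field_simp

lemma fub {c l : ℝ} (hc : c ∈ Ioo (0:ℝ) 1) (hl : 0 ≤ l) :
    ∫ x2 in Ioi (0:ℝ), Real.exp (-x2)
        * ∫ u in Ioi (0:ℝ), u ^ (-c) * Real.exp (-(x2*u)) / (1+l*u)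
      = ∫ u in Ioi (0:ℝ), u ^ (-c) / ((1+u)*(1+l*u)) := by
  have hHmeas : AEStronglyMeasurable
      (fun p : ℝ × ℝ => p.1 ^ (-c) / (1 + l*p.1) * Real.exp (-((1+p.1)*p.2)))
      ((volume.restrict (Ioi 0)).prod (volume.restrict (Ioi 0))) := by
    apply Measurable.aestronglyMeasurable
    fun_prop
  have hHint : Integrable
      (fun p : ℝ × ℝ => p.1 ^ (-c) / (1 + l*p.1) * Real.exp (-((1+p.1)*p.2)))
      ((volume.restrict (Ioi 0)).prod (volume.restrict (Ioi 0))) := by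
    rw [integrable_prod_iff hHmeas]
    constructor
    · filter_upwards [ae_restrict_mem measurableSet_Ioi] with u hu
      have h1u : (0:ℝ) < 1 + u := by have : (0:ℝ) < u := hu; linarith
      exact (integrableOn_exp_neg_mul h1u).const_mul _
    · have heq : (fun u : ℝ => ∫ x2 in Ioi (0:ℝ),
            ‖u ^ (-c) / (1 + l*u) * Real.exp (-((1+u)*x2))‖)
          =ᵐ[volume.restrict (Ioi (0:ℝ))]
          (fun u => u ^ (-c) / ((1+u)*(1+l*u))) := by
        filter_upwards [ae_restrict_mem measurableSet_Ioi] with u hu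
        have hu0 : (0:ℝ) < u := hu
        have h1u : (0:ℝ) < 1 + u := by linarith
        have h1lu : (0:ℝ) < 1 + l*u := by nlinarith [mul_nonneg hl hu0.le]
        have enorm : ∫ x2 in Ioi (0:ℝ), ‖u ^ (-c) / (1 + l*u) * Real.exp (-((1+u)*x2))‖
            = ∫ x2 in Ioi (0:ℝ), u ^ (-c) / (1 + l*u) * Real.exp (-((1+u)*x2)) := by
          refine integral_congr_ae (ae_of_all _ (fun x2 => ?_))
          show ‖u ^ (-c) / (1 + l*u) * Real.exp (-((1+u)*x2))‖
            = u ^ (-c) / (1 + l*u) * Real.exp (-((1+u)*x2))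
          rw [norm_of_nonneg]
          positivity
        rw [enorm, integral_const_mul, integral_exp_neg_mul_Ioi h1u,
          div_mul_div_comm, mul_one, mul_comm (1+l*u) (1+u)]
      exact (K_integrableOn hc hl).congr heq.symm
  have swap := integral_integral_swap
    (f := fun u x2 : ℝ => u ^ (-c) / (1 + l*u) * Real.exp (-((1+u)*x2))) hHint
  have left : ∫ u in Ioi (0:ℝ),
        ∫ x2 in Ioi (0:ℝ), u ^ (-c) / (1 + l*u) * Real.exp (-((1+u)*x2))
      = ∫ u in Ioi (0:ℝ), u ^ (-c) / ((1+u)*(1+l*u)) := by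
    refine integral_congr_ae ?_
    filter_upwards [ae_restrict_mem measurableSet_Ioi] with u hu
    have hu0 : (0:ℝ) < u := hu
    have h1u : (0:ℝ) < 1 + u := by linarith
    have h1lu : (0:ℝ) < 1 + l*u := by nlinarith [mul_nonneg hl hu0.le]
    show ∫ x2 in Ioi (0:ℝ), u ^ (-c) / (1 + l*u) * Real.exp (-((1+u)*x2))
      = u ^ (-c) / ((1+u)*(1+l*u))
    rw [integral_const_mul, integral_exp_neg_mul_Ioi h1u,
      div_mul_div_comm, mul_one, mul_comm (1+l*u) (1+u)]
  have right : ∫ x2 in Ioi (0:ℝ),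
        ∫ u in Ioi (0:ℝ), u ^ (-c) / (1 + l*u) * Real.exp (-((1+u)*x2))
      = ∫ x2 in Ioi (0:ℝ), Real.exp (-x2)
          * ∫ u in Ioi (0:ℝ), u ^ (-c) * Real.exp (-(x2*u)) / (1+l*u) := by
    refine integral_congr_ae (ae_of_all _ (fun x2 => ?_))
    have e3 : ∀ u ∈ Ioi (0:ℝ), u ^ (-c) / (1 + l*u) * Real.exp (-((1+u)*x2))
        = Real.exp (-x2) * (u ^ (-c) * Real.exp (-(x2*u)) / (1+l*u)) := by
      intro u hu
      rw [show -((1+u)*x2) = -x2 + -(x2*u) by ring, Real.exp_add]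
      ring
    show ∫ u in Ioi (0:ℝ), u ^ (-c) / (1 + l*u) * Real.exp (-((1+u)*x2)) = _
    rw [setIntegral_congr_fun measurableSet_Ioi e3, integral_const_mul]
  rw [← right, ← swap, left]


lemma E_eq {Ω : Type*} [MeasurableSpace Ω] (μ : Measure Ω)
    [IsProbabilityMeasure μ] {c : ℝ} (hc : c ∈ Ioo (0:ℝ) 1)
    (X : Fin 3 → Ω → ℝ) (hmeas : ∀ i, Measurable (X i))
    (hind : iIndepFun X μ)
    (h0 : Measure.map (X 0) μ = gammaMeasure 1 1)
    (h1 : Measure.map (X 1) μ = gammaMeasure (1 - c) 1)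
    (h2 : Measure.map (X 2) μ = gammaMeasure c 1)
    {l : ℝ} (hl : 0 ≤ l) :
    ∫ ω, Real.exp (-(l * (X 0 ω * X 1 ω / X 2 ω))) ∂μ
      = (∫ u in Ioi (0:ℝ), u ^ (-c) / ((1+u)*(1+l*u))) / (Gamma (1-c) * Gamma c) := by
  have hc1 : (0:ℝ) < 1 - c := by linarith [hc.2]
  haveI i1 : IsProbabilityMeasure (gammaMeasure 1 1) := isProbabilityMeasure_gammaMeasure one_pos one_pos
  haveI i2 : IsProbabilityMeasure (gammaMeasure (1-c) 1) := isProbabilityMeasure_gammaMeasure hc1 one_pos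
  haveI i3 : IsProbabilityMeasure (gammaMeasure c 1) := isProbabilityMeasure_gammaMeasure hc.1 one_pos
  have hpairmeas : Measurable (fun ω => (X 1 ω, X 2 ω)) := (hmeas 1).prodMk (hmeas 2)
  have hmapPair : Measure.map (fun ω => (X 1 ω, X 2 ω)) μ
      = (gammaMeasure (1-c) 1).prod (gammaMeasure c 1) := by
    rw [← h1, ← h2]
    exact (indepFun_iff_map_prod_eq_prod_map_map (hmeas 1).aemeasurable
      (hmeas 2).aemeasurable).1 (hind.indepFun (by decide))
  have hindep0 : IndepFun (X 0) (fun ω => (X 1 ω, X 2 ω)) μ :=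
    (iIndepFun.indepFun_prodMk hind hmeas 1 2 0 (by decide) (by decide)).symm
  have hmap : Measure.map (fun ω => (X 0 ω, (X 1 ω, X 2 ω))) μ
      = (gammaMeasure 1 1).prod ((gammaMeasure (1-c) 1).prod (gammaMeasure c 1)) := by
    rw [← h0, ← hmapPair]
    exact (indepFun_iff_map_prod_eq_prod_map_map (hmeas 0).aemeasurable
      hpairmeas.aemeasurable).1 hindep0
  have hfmeas : Measurable (fun p : ℝ × ℝ × ℝ => Real.exp (-(l * (p.1 * p.2.1 / p.2.2)))) := by
    fun_prop
  have aeν : ∀ᵐ q ∂((gammaMeasure (1-c) 1).prod (gammaMeasure c 1)), 0 < q.1 ∧ 0 < q.2 := by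
    have b1 : ((gammaMeasure (1-c) 1).prod (gammaMeasure c 1))
        ((Iic 0) ×ˢ (univ : Set ℝ)) = 0 := by
      rw [Measure.prod_prod, gammaMeasure_Iic hc1, zero_mul]
    have b2 : ((gammaMeasure (1-c) 1).prod (gammaMeasure c 1))
        ((univ : Set ℝ) ×ˢ (Iic 0)) = 0 := by
      rw [Measure.prod_prod, gammaMeasure_Iic hc.1, mul_zero]
    have h3 := compl_mem_ae_iff.2 (measure_union_null b1 b2)
    filter_upwards [h3] with q hq
    simp only [mem_compl_iff, mem_union, mem_prod, mem_Iic, mem_univ, and_true, true_and,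
      not_or, not_le] at hq
    exact hq
  have aeP : ∀ᵐ p ∂((gammaMeasure 1 1).prod ((gammaMeasure (1-c) 1).prod (gammaMeasure c 1))),
      0 < p.1 ∧ (0 < p.2.1 ∧ 0 < p.2.2) := by
    have b1 : ((gammaMeasure 1 1).prod ((gammaMeasure (1-c) 1).prod (gammaMeasure c 1)))
        ((Iic 0) ×ˢ (univ : Set (ℝ × ℝ))) = 0 := by
      rw [Measure.prod_prod, gammaMeasure_Iic one_pos, zero_mul]
    have b2 : ((gammaMeasure 1 1).prod ((gammaMeasure (1-c) 1).prod (gammaMeasure c 1)))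
        ((univ : Set ℝ) ×ˢ {q : ℝ × ℝ | ¬(0 < q.1 ∧ 0 < q.2)}) = 0 := by
      rw [Measure.prod_prod, ae_iff.1 aeν, mul_zero]
    have h3 := compl_mem_ae_iff.2 (measure_union_null b1 b2)
    filter_upwards [h3] with p hp
    simp only [mem_compl_iff, mem_union, mem_prod, mem_Iic, mem_univ, and_true, true_and,
      not_or, not_le, mem_setOf_eq, not_not] at hp
    exact hp
  have hfint : Integrable (fun p : ℝ × ℝ × ℝ => Real.exp (-(l * (p.1 * p.2.1 / p.2.2))))
      ((gammaMeasure 1 1).prod ((gammaMeasure (1-c) 1).prod (gammaMeasure c 1))) := by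
    refine Integrable.mono' (integrable_const 1) hfmeas.aestronglyMeasurable ?_
    filter_upwards [aeP] with p hp
    rw [norm_of_nonneg (Real.exp_pos _).le, Real.exp_le_one_iff]
    have : 0 ≤ l * (p.1 * p.2.1 / p.2.2) :=
      mul_nonneg hl (div_nonneg (mul_nonneg hp.1.le hp.2.1.le) hp.2.2.le)
    linarith
  have step1 : ∫ ω, Real.exp (-(l * (X 0 ω * X 1 ω / X 2 ω))) ∂μ
      = ∫ p : ℝ × ℝ × ℝ, Real.exp (-(l * (p.1 * p.2.1 / p.2.2)))
          ∂((gammaMeasure 1 1).prod ((gammaMeasure (1-c) 1).prod (gammaMeasure c 1))) := by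
    rw [← hmap, integral_map ((hmeas 0).prodMk hpairmeas).aemeasurable
      hfmeas.aestronglyMeasurable]
  have step2 : ∫ p : ℝ × ℝ × ℝ, Real.exp (-(l * (p.1 * p.2.1 / p.2.2)))
          ∂((gammaMeasure 1 1).prod ((gammaMeasure (1-c) 1).prod (gammaMeasure c 1)))
      = ∫ q : ℝ × ℝ, (∫ x, Real.exp (-(l * (x * q.1 / q.2))) ∂(gammaMeasure 1 1))
          ∂((gammaMeasure (1-c) 1).prod (gammaMeasure c 1)) :=
    integral_prod_symm _ hfint
  have step3 : ∫ q : ℝ × ℝ, (∫ x, Real.exp (-(l * (x * q.1 / q.2))) ∂(gammaMeasure 1 1))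
          ∂((gammaMeasure (1-c) 1).prod (gammaMeasure c 1))
      = ∫ q : ℝ × ℝ, q.2 / (q.2 + l * q.1)
          ∂((gammaMeasure (1-c) 1).prod (gammaMeasure c 1)) := by
    refine integral_congr_ae ?_
    filter_upwards [aeν] with q hq
    exact inner1 hl hq.1 hq.2
  have hgmeas : Measurable (fun q : ℝ × ℝ => q.2 / (q.2 + l * q.1)) := by fun_prop
  have hgint : Integrable (fun q : ℝ × ℝ => q.2 / (q.2 + l * q.1))
      ((gammaMeasure (1-c) 1).prod (gammaMeasure c 1)) := by
    refine Integrable.mono' (integrable_const 1) hgmeas.aestronglyMeasurable ?_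
    filter_upwards [aeν] with q hq
    have h1 : 0 < q.2 + l * q.1 := by nlinarith [mul_nonneg hl hq.1.le]
    rw [norm_of_nonneg (div_nonneg hq.2.le h1.le), div_le_one h1]
    nlinarith [mul_nonneg hl hq.1.le]
  have step4 : ∫ q : ℝ × ℝ, q.2 / (q.2 + l * q.1)
          ∂((gammaMeasure (1-c) 1).prod (gammaMeasure c 1))
      = ∫ x2, (∫ x1, x2 / (x2 + l * x1) ∂(gammaMeasure (1-c) 1)) ∂(gammaMeasure c 1) :=
    integral_prod_symm _ hgint
  have step5' : ∫ x2, (∫ x1, x2 / (x2 + l * x1) ∂(gammaMeasure (1-c) 1)) ∂(gammaMeasure c 1)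
      = ∫ x2, (x2 ^ (1-c) / Gamma (1-c)
          * ∫ u in Ioi (0:ℝ), u ^ (-c) * Real.exp (-(x2*u)) / (1+l*u)) ∂(gammaMeasure c 1) := by
    refine integral_congr_ae ?_
    filter_upwards [gammaMeasure_ae_pos hc.1] with x2 hx2
    exact step5 hc hl x2 hx2
  have step6 : ∫ x2, (x2 ^ (1-c) / Gamma (1-c)
          * ∫ u in Ioi (0:ℝ), u ^ (-c) * Real.exp (-(x2*u)) / (1+l*u)) ∂(gammaMeasure c 1)
      = (1 / (Gamma (1-c) * Gamma c)) * ∫ x2 in Ioi (0:ℝ), Real.exp (-x2)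
          * ∫ u in Ioi (0:ℝ), u ^ (-c) * Real.exp (-(x2*u)) / (1+l*u) := by
    rw [integral_gammaMeasure hc.1, ← integral_const_mul]
    refine setIntegral_congr_fun measurableSet_Ioi (fun x2 hx2 => ?_)
    have hx0 : (0:ℝ) < x2 := hx2
    have hone : x2 ^ (c-1) * x2 ^ ((1:ℝ)-c) = 1 := by
      rw [← Real.rpow_add hx0]
      norm_num
    rw [show (x2 ^ (c-1) * Real.exp (-x2) / Gamma c) * (x2 ^ ((1:ℝ)-c) / Gamma (1-c)
          * ∫ u in Ioi (0:ℝ), u ^ (-c) * Real.exp (-(x2*u)) / (1+l*u))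
      = (x2 ^ (c-1) * x2 ^ ((1:ℝ)-c)) * (Real.exp (-x2)
          * ∫ u in Ioi (0:ℝ), u ^ (-c) * Real.exp (-(x2*u)) / (1+l*u)) / (Gamma c * Gamma (1-c))
        from by ring, hone, one_mul]
    ring
  rw [step1, step2, step3, step4, step5', step6, fub hc hl]
  ring

end GQL

open Real Set MeasureTheory ProbabilityTheory

/-- For independent gamma variables `G₁, G_{1-c}, G_c` (rate 1),
`E[exp(-λ G₁ G_{1-c}/G_c)] = (1-λ^c)/(1-λ)` for `λ ≥ 0, λ ≠ 1`, and `= c` at `λ = 1`. -/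
theorem gamma_quotient_laplace {Ω : Type*} [MeasurableSpace Ω] (μ : Measure Ω)
    [IsProbabilityMeasure μ] (c : ℝ) (hc : c ∈ Ioo (0:ℝ) 1)
    (X : Fin 3 → Ω → ℝ) (hmeas : ∀ i, Measurable (X i))
    (hind : iIndepFun X μ)
    (h0 : Measure.map (X 0) μ = gammaMeasure 1 1)
    (h1 : Measure.map (X 1) μ = gammaMeasure (1 - c) 1)
    (h2 : Measure.map (X 2) μ = gammaMeasure c 1) :
    (∀ l : ℝ, 0 ≤ l → l ≠ 1 →
      ∫ ω, Real.exp (-(l * (X 0 ω * X 1 ω / X 2 ω))) ∂μ = (1 - l ^ c) / (1 - l)) ∧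
    ∫ ω, Real.exp (-(X 0 ω * X 1 ω / X 2 ω)) ∂μ = c := by
  have hc1 : (0:ℝ) < 1 - c := by linarith [hc.2]
  have hG : Gamma (1-c) * Gamma c ≠ 0 :=
    (mul_pos (Real.Gamma_pos_of_pos hc1) (Real.Gamma_pos_of_pos hc.1)).ne'
  constructor
  · intro l hl hl1
    rw [GQL.E_eq μ hc X hmeas hind h0 h1 h2 hl, GQL.K_integral_ne hc hl hl1,
      mul_div_assoc, div_self hG, mul_one]
  · have h := GQL.E_eq μ hc X hmeas hind h0 h1 h2 (l := 1) zero_le_one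
    simp only [one_mul] at h
    rw [h, GQL.inv_sq_integral hc, mul_div_assoc, div_self hG, mul_one]
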